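/- Let T be a positive operator in the Dixmier ideal M_{1,∞} and ω an exponentiation invariant generalized limit on L∞(0,∞). Then Tr_ω(T) = ω(t ↦ (1/log(1+t))∫₀^{d_T(1/t)} μ(s,T) ds), where d_T(s) = Tr(χ_{(s,∞)}(T)) is the distribution function of T. -/

import Mathlib

open Real Filter MeasureTheory

noncomputable section

/-- A function on `(0,∞)` (modelled on all of `ℝ`) is (essentially) bounded. -/
def Bdd (f : ℝ → ℝ) : Prop := ∃ C, ∀ t, |f t| ≤ C

/-- A generalized limit: a positive, normalized linear functional on `L∞(0,∞)`
(modelled as bounded functions `ℝ → ℝ`) which extends the limit at infinity. -/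
structure GenLimit where
  ω : (ℝ → ℝ) → ℝ
  add : ∀ f g, Bdd f → Bdd g → ω (f + g) = ω f + ω g
  smul : ∀ (c : ℝ) f, Bdd f → ω (c • f) = c * ω f
  pos : ∀ f, Bdd f → (∀ t, 0 ≤ f t) → 0 ≤ ω f
  lim : ∀ f (c : ℝ), Bdd f → Tendsto f atTop (nhds c) → ω f = c

/-- Exponentiation invariance: `ω(x ∘ (t ↦ t^a)) = ω(x)` for all `a > 0`. -/
def GenLimit.ExpInvariant (γ : GenLimit) : Prop :=
  ∀ f, Bdd f → ∀ a > (0:ℝ), γ.ω (fun t => f (t ^ a)) = γ.ω f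

/-- Dilation invariance: `ω(x ∘ (t ↦ βt)) = ω(x)` for all `β > 0`. -/
def GenLimit.DilInvariant (γ : GenLimit) : Prop :=
  ∀ f, Bdd f → ∀ β > (0:ℝ), γ.ω (fun t => f (β * t)) = γ.ω f

/-- Translation invariance: `ω(x(·+l)) = ω(x)` for all `l > 0`. -/
def GenLimit.TransInvariant (γ : GenLimit) : Prop :=
  ∀ f, Bdd f → ∀ l > (0:ℝ), γ.ω (fun t => f (t + l)) = γ.ω f

variable {H : Type*} [NormedAddCommGroup H] [InnerProductSpace ℂ H] [CompleteSpace H]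

/-- The singular value function `μ(s,T) = inf {‖Tp‖ : p projection, Tr(1-p) ≤ s}`. -/
def sv (T : H →L[ℂ] H) (s : ℝ) : ℝ :=
  sInf {c : ℝ | ∃ p : H →L[ℂ] H, IsIdempotentElem p ∧ IsSelfAdjoint p ∧
    ∃ _ : FiniteDimensional ℂ (LinearMap.range ((1 - p : H →L[ℂ] H) : H →ₗ[ℂ] H)),
      (Module.finrank ℂ (LinearMap.range ((1 - p : H →L[ℂ] H) : H →ₗ[ℂ] H)) : ℝ) ≤ s ∧
      c = ‖T ∘L p‖}

/-- The Cesàro-type averages `t ↦ (1/log(1+t)) ∫₀ᵗ μ(s,T) ds`. -/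
def avg (T : H →L[ℂ] H) : ℝ → ℝ :=
  fun t => (Real.log (1 + t))⁻¹ * ∫ s in (0:ℝ)..t, sv T s

/-- Membership in the Dixmier ideal `M_{1,∞}`. -/
def MemM1Inf (T : H →L[ℂ] H) : Prop :=
  IsCompactOperator ⇑T ∧ ∃ C, ∀ t > (0:ℝ), avg T t ≤ C

/-- The distribution function `d_T` of `T`, realized as the distribution function of the
singular value function `μ(·,T)` (with which it coincides, by Fack–Kosaki). -/
def dFun (T : H →L[ℂ] H) (t : ℝ) : ℝ :=
  (volume {s : ℝ | 0 ≤ s ∧ t < sv T s}).toReal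

/-! ### Auxiliary material for the proof -/

set_option linter.unusedSectionVars false

open Set intervalIntegral

section SV

/-- The defining set for `sv`. -/
def svSet (T : H →L[ℂ] H) (s : ℝ) : Set ℝ :=
  {c : ℝ | ∃ p : H →L[ℂ] H, IsIdempotentElem p ∧ IsSelfAdjoint p ∧
    ∃ _ : FiniteDimensional ℂ (LinearMap.range ((1 - p : H →L[ℂ] H) : H →ₗ[ℂ] H)),
      (Module.finrank ℂ (LinearMap.range ((1 - p : H →L[ℂ] H) : H →ₗ[ℂ] H)) : ℝ) ≤ s ∧
      c = ‖T ∘L p‖}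

lemma sv_eq (T : H →L[ℂ] H) (s : ℝ) : sv T s = sInf (svSet T s) := rfl

lemma svSet_nonneg (T : H →L[ℂ] H) (s : ℝ) : ∀ c ∈ svSet T s, 0 ≤ c := by
  rintro c ⟨p, _, _, _, _, rfl⟩; exact norm_nonneg _

lemma sv_nonneg (T : H →L[ℂ] H) (s : ℝ) : 0 ≤ sv T s :=
  Real.sInf_nonneg (svSet_nonneg T s)

lemma top_mem_svSet (T : H →L[ℂ] H) {s : ℝ} (hs : 0 ≤ s) : ‖T‖ ∈ svSet T s := by
  refine ⟨1, ?_, ?_, ?_⟩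
  · simp [IsIdempotentElem]
  · exact .one _
  · have h1 : ((1 - 1 : H →L[ℂ] H) : H →ₗ[ℂ] H) = 0 := by simp
    rw [h1, LinearMap.range_zero]
    refine ⟨inferInstance, ?_, ?_⟩
    · rw [finrank_bot]; simpa using hs
    · rw [ContinuousLinearMap.one_def, ContinuousLinearMap.comp_id]

lemma svSet_mono (T : H →L[ℂ] H) {s s' : ℝ} (h : s ≤ s') : svSet T s ⊆ svSet T s' := by
  rintro c ⟨p, h1, h2, h3, h4, rfl⟩; exact ⟨p, h1, h2, h3, h4.trans h, rfl⟩

lemma sv_antitoneOn (T : H →L[ℂ] H) : AntitoneOn (sv T) (Set.Ici 0) := by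
  intro s hs s' _ hss
  exact csInf_le_csInf ⟨0, svSet_nonneg T s'⟩ ⟨‖T‖, top_mem_svSet T hs⟩ (svSet_mono T hss)

lemma sv_eq_zero_of_neg (T : H →L[ℂ] H) {s : ℝ} (hs : s < 0) : sv T s = 0 := by
  have : svSet T s = ∅ := by
    ext c; simp only [Set.mem_empty_iff_false, iff_false]
    rintro ⟨p, _, _, _, h4, _⟩
    have : (0:ℝ) ≤ (Module.finrank ℂ (LinearMap.range ((1 - p : H →L[ℂ] H) : H →ₗ[ℂ] H)) : ℝ) := by
      positivity
    linarith
  rw [sv_eq, this, Real.sInf_empty]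

end SV

section Integral

/-- `Iv T x = ∫₀ˣ μ(s,T) ds`. -/
def Iv (T : H →L[ℂ] H) (x : ℝ) : ℝ := ∫ s in (0:ℝ)..x, sv T s

lemma avg_eq (T : H →L[ℂ] H) (t : ℝ) : avg T t = (Real.log (1 + t))⁻¹ * Iv T t := rfl

lemma sv_intInt (T : H →L[ℂ] H) {a b : ℝ} (ha : 0 ≤ a) (hb : 0 ≤ b) :
    IntervalIntegrable (sv T) volume a b := by
  apply AntitoneOn.intervalIntegrable
  exact (sv_antitoneOn T).mono (fun x hx => le_trans (le_min ha hb) hx.1)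

lemma Iv_nonneg (T : H →L[ℂ] H) {x : ℝ} (hx : 0 ≤ x) : 0 ≤ Iv T x :=
  intervalIntegral.integral_nonneg hx (fun s _ => sv_nonneg T s)

lemma Iv_mono (T : H →L[ℂ] H) {x y : ℝ} (hx : 0 ≤ x) (hxy : x ≤ y) : Iv T x ≤ Iv T y := by
  have h1 : Iv T y - Iv T x = ∫ s in x..y, sv T s := by
    rw [Iv, Iv, ← integral_interval_sub_left (sv_intInt T le_rfl (hx.trans hxy))
      (sv_intInt T le_rfl hx)]
  have h2 : (0:ℝ) ≤ ∫ s in x..y, sv T s :=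
    intervalIntegral.integral_nonneg (μ := volume) hxy (fun s _ => sv_nonneg T s)
  linarith

/-- If `u ≤ sv` on `[0,d)` then `u * d ≤ Iv d`. -/
lemma le_Iv_of_lower (T : H →L[ℂ] H) {u d : ℝ} (hd : 0 ≤ d)
    (h : ∀ s, 0 ≤ s → s < d → u ≤ sv T s) : u * d ≤ Iv T d := by
  have hInt : IntegrableOn (sv T) (Ioo 0 d) volume := by
    have := (intervalIntegrable_iff_integrableOn_Ioc_of_le hd).1 (sv_intInt T le_rfl hd)
    exact this.mono_set Ioo_subset_Ioc_self
  have h1 : Iv T d = ∫ s in Ioo 0 d, sv T s := by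
    rw [Iv, integral_of_le hd, integral_Ioc_eq_integral_Ioo]
  have h2 : ∫ s in Ioo 0 d, (u:ℝ) ≤ ∫ s in Ioo 0 d, sv T s := by
    apply setIntegral_mono_on (integrableOn_const measure_Ioo_lt_top.ne) hInt
      measurableSet_Ioo
    intro x hx; exact h x hx.1.le hx.2
  have h3 : ∫ _ in Ioo 0 d, (u:ℝ) = d * u := by
    rw [setIntegral_const, measureReal_def, Real.volume_Ioo, smul_eq_mul, ENNReal.toReal_ofReal (by linarith)]
    ring_nf
  nlinarith [h1, h2, h3]

/-- If `sv ≤ u` on `(d, t]` then `Iv t ≤ Iv d + u * (t - d)`. -/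
lemma Iv_le_of_upper (T : H →L[ℂ] H) {u d t : ℝ} (hd : 0 ≤ d) (hdt : d ≤ t) (hu : 0 ≤ u)
    (h : ∀ s, d < s → sv T s ≤ u) : Iv T t ≤ Iv T d + u * (t - d) := by
  have h1 : Iv T t - Iv T d = ∫ s in d..t, sv T s := by
    rw [Iv, Iv, ← integral_interval_sub_left (sv_intInt T le_rfl (hd.trans hdt))
      (sv_intInt T le_rfl hd)]
  have hInt : IntegrableOn (sv T) (Ioc d t) volume :=
    (intervalIntegrable_iff_integrableOn_Ioc_of_le hdt).1 (sv_intInt T hd (hd.trans hdt))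
  have h2 : ∫ s in d..t, sv T s = ∫ s in Ioc d t, sv T s := integral_of_le hdt
  have h3 : ∫ s in Ioc d t, sv T s ≤ ∫ _ in Ioc d t, u := by
    apply setIntegral_mono_on hInt (integrableOn_const measure_Ioc_lt_top.ne)
      measurableSet_Ioc
    intro x hx; exact h x hx.1
  have h4 : ∫ _ in Ioc d t, (u:ℝ) = (t - d) * u := by
    rw [setIntegral_const, measureReal_def, Real.volume_Ioc, smul_eq_mul, ENNReal.toReal_ofReal (by linarith)]
  nlinarith [h1, h2, h3, h4]

lemma s_mul_sv_le_Iv (T : H →L[ℂ] H) {s : ℝ} (hs : 0 ≤ s) : sv T s * s ≤ Iv T s :=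
  le_Iv_of_lower T hs (fun x hx hxs => sv_antitoneOn T hx hs hxs.le)

lemma Iv_zero_of_nonpos (T : H →L[ℂ] H) {t : ℝ} (ht : t ≤ 0) : Iv T t = 0 := by
  have h1 : (∫ s in t..(0:ℝ), sv T s) = 0 := by
    rw [integral_of_le ht, integral_Ioc_eq_integral_Ioo,
      setIntegral_congr_fun measurableSet_Ioo (g := fun _ => (0:ℝ))
        (fun s hs => sv_eq_zero_of_neg T hs.2)]
    simp
  rw [Iv, intervalIntegral.integral_symm, h1, neg_zero]

end Integral

section DFun

lemma log_add_one_le_two_sqrt {s : ℝ} (hs : 0 ≤ s) : Real.log (1 + s) ≤ 2 * Real.sqrt s := by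
  have h0 : Real.log (1 + s) = 2 * Real.log (Real.sqrt (1 + s)) := by
    rw [Real.log_sqrt (by linarith)]; ring
  have h1 : Real.log (Real.sqrt (1 + s)) ≤ Real.sqrt (1 + s) - 1 :=
    Real.log_le_sub_one_of_pos (Real.sqrt_pos.2 (by linarith))
  have h2 : Real.sqrt (1 + s) ≤ 1 + Real.sqrt s := by
    nlinarith [Real.sq_sqrt (show (0:ℝ) ≤ 1 + s by linarith), Real.sq_sqrt hs,
      Real.sqrt_nonneg (1+s), Real.sqrt_nonneg s]
  linarith

theorem dFun_spec (T : H →L[ℂ] H) {C : ℝ} (hC1 : 1 ≤ C)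
    (hC : ∀ x, 0 ≤ x → Iv T x ≤ C * Real.log (1 + x)) {u : ℝ} (hu : 0 < u) :
    0 ≤ dFun T u ∧ (∀ s, dFun T u < s → sv T s ≤ u) ∧
      (∀ s, 0 ≤ s → s < dFun T u → u < sv T s) := by
  set S : Set ℝ := {s : ℝ | 0 ≤ s ∧ u < sv T s} with hS
  have hlower : ∀ s ∈ S, ∀ x, 0 ≤ x → x ≤ s → x ∈ S := by
    rintro s ⟨hs0, hsu⟩ x hx0 hxs
    exact ⟨hx0, lt_of_lt_of_le hsu (sv_antitoneOn T hx0 hs0 hxs)⟩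
  obtain ⟨B, hB⟩ : ∃ B:ℝ, B = 1 + 16 * C ^ 2 / u ^ 2 := ⟨_, rfl⟩
  have hBpos : 0 < B := by rw [hB]; positivity
  have hSB : S ⊆ Icc 0 B := by
    rintro s ⟨hs0, hsu⟩
    refine ⟨hs0, ?_⟩
    have h1 : sv T s * s ≤ Iv T s := s_mul_sv_le_Iv T hs0
    have h2 : Iv T s ≤ C * (2 * Real.sqrt s) :=
      (hC s hs0).trans (by nlinarith [log_add_one_le_two_sqrt hs0])
    have h3 : u * s ≤ 2 * C * Real.sqrt s := by nlinarith
    have hpos16 : (0:ℝ) ≤ 16 * C ^ 2 / u ^ 2 := by positivity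
    rcases le_or_gt s 1 with h | h
    · linarith
    · have hsq : Real.sqrt s * Real.sqrt s = s := Real.mul_self_sqrt hs0
      have hsq1 : 1 ≤ Real.sqrt s := by nlinarith [Real.sqrt_nonneg s]
      have h4 : u * Real.sqrt s ≤ 2 * C := by nlinarith [Real.sqrt_nonneg s]
      have h5 : Real.sqrt s ≤ 2 * C / u := by rw [le_div_iff₀ hu]; linarith
      have : s ≤ (2 * C / u) ^ 2 := by nlinarith [Real.sqrt_nonneg s]
      have : (2 * C / u) ^ 2 = 4 * C ^ 2 / u ^ 2 := by ring
      have h12 : (0:ℝ) ≤ 12 * C ^ 2 / u ^ 2 := by positivity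
      have heq : 4 * C ^ 2 / u ^ 2 + 12 * C ^ 2 / u ^ 2 = 16 * C ^ 2 / u ^ 2 := by ring
      linarith
  rcases eq_empty_or_nonempty S with hSe | hSne
  · have hvol : dFun T u = 0 := by rw [dFun, ← hS, hSe]; simp
    refine ⟨le_of_eq hvol.symm, ?_, ?_⟩
    · intro s hs
      rw [hvol] at hs
      by_contra hcon
      exact (Set.eq_empty_iff_forall_notMem.1 hSe s) ⟨hs.le, not_le.1 hcon⟩
    · intro s hs0 hsd; rw [hvol] at hsd; linarith
  · set b : ℝ := sSup S with hb
    have hbdd : BddAbove S := ⟨B, fun s hs => (hSB hs).2⟩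
    have hb0 : 0 ≤ b := (hSne.some_mem.1).trans (le_csSup hbdd hSne.some_mem)
    have hSIcc : S ⊆ Icc 0 b := fun s hs => ⟨hs.1, le_csSup hbdd hs⟩
    have hIco : Ico 0 b ⊆ S := by
      rintro x ⟨hx0, hxb⟩
      obtain ⟨s, hsS, hxs⟩ := exists_lt_of_lt_csSup hSne hxb
      exact hlower s hsS x hx0 hxs.le
    have hvol : volume S = ENNReal.ofReal b := by
      apply le_antisymm
      · calc volume S ≤ volume (Icc 0 b) := measure_mono hSIcc
          _ = ENNReal.ofReal b := by rw [Real.volume_Icc]; simp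
      · calc ENNReal.ofReal b = volume (Ico 0 b) := by rw [Real.volume_Ico]; simp
          _ ≤ volume S := measure_mono hIco
    have hd : dFun T u = b := by rw [dFun, ← hS, hvol, ENNReal.toReal_ofReal hb0]
    refine ⟨hd ▸ hb0, ?_, ?_⟩
    · intro s hs
      rw [hd] at hs
      by_contra hcon
      have : s ∈ S := ⟨(hb0.trans hs.le), not_le.1 hcon⟩
      exact absurd (hSIcc this).2 (not_le.2 hs)
    · intro s hs0 hsd
      rw [hd] at hsd
      exact (hIco ⟨hs0, hsd⟩).2

variable (T : H →L[ℂ] H) {C : ℝ} (hC1 : 1 ≤ C)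
  (hC : ∀ x, 0 ≤ x → Iv T x ≤ C * Real.log (1 + x))

include hC1 hC

/-- `u · d ≤ Iv(d)` where `d = dFun T u`. -/
lemma mul_dFun_le_Iv {u : ℝ} (hu : 0 < u) : u * dFun T u ≤ Iv T (dFun T u) := by
  obtain ⟨h0, _, h2⟩ := dFun_spec T hC1 hC hu
  exact le_Iv_of_lower T h0 (fun s hs0 hsd => (h2 s hs0 hsd).le)

/-- `d ≤ 4C²t²` for `t > 0`. -/
lemma dFun_le_sq {t : ℝ} (ht0 : 0 < t) : dFun T t⁻¹ ≤ 4 * C ^ 2 * t ^ 2 := by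
  have hu : 0 < t⁻¹ := inv_pos.2 ht0
  have h0 : 0 ≤ dFun T t⁻¹ := (dFun_spec T hC1 hC hu).1
  set d := dFun T t⁻¹ with hd
  have h1 : t⁻¹ * d ≤ Iv T d := mul_dFun_le_Iv T hC1 hC hu
  have h2 : Iv T d ≤ C * (2 * Real.sqrt d) :=
    (hC d h0).trans (by nlinarith [log_add_one_le_two_sqrt h0])
  have h3 : d ≤ t * (2 * C * Real.sqrt d) := by
    have := mul_le_mul_of_nonneg_left (h1.trans h2) ht0.le
    rw [← mul_assoc, mul_inv_cancel₀ ht0.ne', one_mul] at this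
    nlinarith
  rcases eq_or_lt_of_le h0 with h | h
  · nlinarith
  · have hsq : Real.sqrt d * Real.sqrt d = d := Real.mul_self_sqrt h0
    have hsqpos : 0 < Real.sqrt d := Real.sqrt_pos.2 h
    have h4 : Real.sqrt d ≤ 2 * C * t := by nlinarith
    nlinarith

/-- For each `a > 1`, eventually `dFun T t⁻¹ ≤ t ^ a`. -/
lemma eventually_dFun_le_rpow {a : ℝ} (ha : 1 < a) :
    ∀ᶠ t in atTop, dFun T t⁻¹ ≤ t ^ a := by
  set ε := (a - 1) / 3 with hε
  have hεpos : 0 < ε := by rw [hε]; linarith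
  set K := (C / ε) * (3 * C) ^ (2 * ε) with hK
  have hev1 : ∀ᶠ t : ℝ in atTop, (1:ℝ) ≤ t := eventually_ge_atTop 1
  have hev2 : ∀ᶠ t : ℝ in atTop, K ≤ t ^ ε :=
    (tendsto_rpow_atTop hεpos).eventually_ge_atTop K
  filter_upwards [hev1, hev2] with t ht hKt
  have ht0 : 0 < t := by linarith
  have hu : 0 < t⁻¹ := inv_pos.2 ht0
  have h0 : 0 ≤ dFun T t⁻¹ := (dFun_spec T hC1 hC hu).1
  set d := dFun T t⁻¹ with hd
  rcases eq_or_lt_of_le h0 with h | hdpos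
  · rw [← h]; exact Real.rpow_nonneg ht0.le a
  have h1 : d ≤ t * (C * Real.log (1 + d)) := by
    have h1a : t⁻¹ * d ≤ Iv T d := mul_dFun_le_Iv T hC1 hC hu
    have h1b := mul_le_mul_of_nonneg_left (h1a.trans (hC d h0)) ht0.le
    rw [← mul_assoc, mul_inv_cancel₀ ht0.ne', one_mul] at h1b
    exact h1b
  have h2 : Real.log (1 + d) ≤ (1 + d) ^ ε / ε :=
    Real.log_le_rpow_div (by linarith) hεpos
  have hC0 : 0 < C := by linarith
  have h3 : 1 + d ≤ (3 * C * t) ^ (2:ℕ) := by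
    have hsq := dFun_le_sq T hC1 hC ht0
    have hCt : 1 ≤ C * t := by nlinarith
    rw [hd]
    nlinarith [hsq, hCt, mul_le_mul hCt hCt (by linarith) (by linarith)]
  have h3Ct : (0:ℝ) < 3 * C * t := by positivity
  have h4 : (1 + d) ^ ε ≤ (3 * C) ^ (2 * ε) * t ^ (2 * ε) := by
    calc (1 + d) ^ ε ≤ ((3 * C * t) ^ (2:ℕ)) ^ ε :=
          Real.rpow_le_rpow (by linarith) h3 hεpos.le
      _ = (3 * C * t) ^ (2 * ε) := by
          rw [← Real.rpow_natCast (3 * C * t) 2, ← Real.rpow_mul h3Ct.le]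
          norm_num
      _ = (3 * C) ^ (2 * ε) * t ^ (2 * ε) := Real.mul_rpow (by positivity) ht0.le
  have h5 : d ≤ K * t ^ (1 + 2 * ε) := by
    have hrw : t ^ (1 + 2 * ε) = t * t ^ (2 * ε) := by
      rw [Real.rpow_add ht0, Real.rpow_one]
    rw [hrw, hK]
    have h2' : C * Real.log (1 + d) ≤ C / ε * (1 + d) ^ ε := by
      calc C * Real.log (1 + d) ≤ C * ((1 + d) ^ ε / ε) :=
            mul_le_mul_of_nonneg_left h2 hC0.le
        _ = C / ε * (1 + d) ^ ε := by ring
    have h4' : C / ε * (1 + d) ^ ε ≤ C / ε * ((3 * C) ^ (2 * ε) * t ^ (2 * ε)) :=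
      mul_le_mul_of_nonneg_left h4 (by positivity)
    calc d ≤ t * (C * Real.log (1 + d)) := h1
      _ ≤ t * (C / ε * ((3 * C) ^ (2 * ε) * t ^ (2 * ε))) :=
          mul_le_mul_of_nonneg_left (h2'.trans h4') ht0.le
      _ = C / ε * (3 * C) ^ (2 * ε) * (t * t ^ (2 * ε)) := by ring
  have h6 : K * t ^ (1 + 2 * ε) ≤ t ^ ε * t ^ (1 + 2 * ε) :=
    mul_le_mul_of_nonneg_right hKt (Real.rpow_nonneg ht0.le _)
  have h7 : t ^ ε * t ^ (1 + 2 * ε) = t ^ a := by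
    rw [← Real.rpow_add ht0]
    congr 1
    rw [hε]; ring
  linarith [h5, h6.trans_eq h7]

end DFun

section Omega

lemma Bdd.add' {f g : ℝ → ℝ} (hf : Bdd f) (hg : Bdd g) : Bdd (f + g) := by
  obtain ⟨Cf, hCf⟩ := hf; obtain ⟨Cg, hCg⟩ := hg
  exact ⟨Cf + Cg, fun t => (abs_add_le _ _).trans (add_le_add (hCf t) (hCg t))⟩

lemma Bdd.max0 {f : ℝ → ℝ} (hf : Bdd f) : Bdd (fun t => max (f t) 0) := by
  obtain ⟨Cf, hCf⟩ := hf
  refine ⟨Cf, fun t => ?_⟩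
  rw [abs_of_nonneg (le_max_right (f t) 0)]
  exact max_le ((le_abs_self (f t)).trans (hCf t)) ((abs_nonneg (f t)).trans (hCf t))

lemma Bdd.neg' {f : ℝ → ℝ} (hf : Bdd f) : Bdd (fun t => -(f t)) := by
  obtain ⟨Cf, hCf⟩ := hf
  exact ⟨Cf, fun t => by rw [abs_neg]; exact hCf t⟩

lemma Bdd.comp' {f : ℝ → ℝ} (hf : Bdd f) (h : ℝ → ℝ) : Bdd (fun t => f (h t)) := by
  obtain ⟨Cf, hCf⟩ := hf
  exact ⟨Cf, fun t => hCf (h t)⟩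

lemma Bdd.smul' {f : ℝ → ℝ} (hf : Bdd f) (c : ℝ) : Bdd (c • f) := by
  obtain ⟨Cf, hCf⟩ := hf
  refine ⟨|c| * Cf, fun t => ?_⟩
  simp only [Pi.smul_apply, smul_eq_mul, abs_mul]
  exact mul_le_mul_of_nonneg_left (hCf t) (abs_nonneg c)

lemma omega_nonneg (γ : GenLimit) {h : ℝ → ℝ} (hb : Bdd h)
    (hev : ∀ᶠ t in atTop, 0 ≤ h t) : 0 ≤ γ.ω h := by
  have hbneg : Bdd (fun t => max (-(h t)) 0) := Bdd.max0 (Bdd.neg' hb)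
  have hbpos : Bdd (fun t => max (h t) 0) := Bdd.max0 hb
  have hneg0 : Tendsto (fun t => max (-(h t)) 0) atTop (nhds 0) := by
    apply Tendsto.congr' _ tendsto_const_nhds
    filter_upwards [hev] with t ht
    simp [max_eq_right (by linarith : -(h t) ≤ 0)]
  have hω0 : γ.ω (fun t => max (-(h t)) 0) = 0 := γ.lim _ 0 hbneg hneg0
  have hsplit : (fun t => max (h t) 0) = h + (fun t => max (-(h t)) 0) := by
    funext t
    simp only [Pi.add_apply]
    rcases le_total (h t) 0 with h' | h'
    · rw [max_eq_right h', max_eq_left (by linarith)]; ring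
    · rw [max_eq_left h', max_eq_right (by linarith)]; ring
  have h1 : γ.ω (fun t => max (h t) 0) = γ.ω h + 0 := by
    rw [hsplit, γ.add h _ hb hbneg, hω0]
  have h2 : 0 ≤ γ.ω (fun t => max (h t) 0) :=
    γ.pos _ hbpos (fun t => le_max_right _ _)
  linarith

lemma omega_mono (γ : GenLimit) {f g : ℝ → ℝ} (hf : Bdd f) (hg : Bdd g)
    (hev : ∀ᶠ t in atTop, f t ≤ g t) : γ.ω f ≤ γ.ω g := by
  have hgf : Bdd (fun t => g t - f t) := by
    have := Bdd.add' hg (Bdd.neg' hf)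
    convert this using 1; funext t; simp [sub_eq_add_neg]
  have h0 : 0 ≤ γ.ω (fun t => g t - f t) :=
    omega_nonneg γ hgf (by filter_upwards [hev] with t ht; linarith)
  have hsum : γ.ω g = γ.ω (fun t => g t - f t) + γ.ω f := by
    rw [← γ.add _ f hgf hf]
    congr 1
    funext t; simp
  linarith

end Omega

theorem trace_eq_distribution_cutoff (T : H →L[ℂ] H) (hT : MemM1Inf T)
    (hTpos : T.IsPositive) (γ : GenLimit) (hexp : γ.ExpInvariant) :
    γ.ω (avg T) =
      γ.ω (fun t => (Real.log (1 + t))⁻¹ * ∫ s in (0:ℝ)..(dFun T t⁻¹), sv T s) := by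
  classical
  obtain ⟨-, C₀, hC₀⟩ := hT
  obtain ⟨C, hC1, hCC⟩ : ∃ C, 1 ≤ C ∧ ∀ t > (0:ℝ), avg T t ≤ C :=
    ⟨max C₀ 1, le_max_right _ _, fun t ht => (hC₀ t ht).trans (le_max_left _ _)⟩
  have hC : ∀ x, 0 ≤ x → Iv T x ≤ C * Real.log (1 + x) := by
    intro x hx
    rcases eq_or_lt_of_le hx with h | h
    · rw [← h]
      simp [Iv, Real.log_one]
    · have hlog : 0 < Real.log (1 + x) := Real.log_pos (by linarith)
      have h1 := hCC x h
      rw [avg_eq] at h1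
      have h2 := mul_le_mul_of_nonneg_left h1 hlog.le
      rw [← mul_assoc, mul_inv_cancel₀ hlog.ne', one_mul] at h2
      linarith
  set G : ℝ → ℝ := fun t => (Real.log (1 + t))⁻¹ * Iv T (dFun T t⁻¹) with hG
  show γ.ω (avg T) = γ.ω G
  -- `avg T` vanishes on `(-∞, 0]`
  have hf0 : ∀ t ≤ (0:ℝ), avg T t = 0 := by
    intro t ht
    rw [avg_eq, Iv_zero_of_nonpos T ht, mul_zero]
  have hfnn : ∀ t, 0 ≤ avg T t := by
    intro t
    rcases le_or_gt t 0 with h | h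
    · rw [hf0 t h]
    · rw [avg_eq]
      have hlog : 0 < Real.log (1 + t) := Real.log_pos (by linarith)
      exact mul_nonneg (inv_nonneg.2 hlog.le) (Iv_nonneg T h.le)
  have hfbd : Bdd (avg T) := by
    refine ⟨C, fun t => ?_⟩
    rw [abs_of_nonneg (hfnn t)]
    rcases le_or_gt t 0 with h | h
    · rw [hf0 t h]; linarith
    · exact hCC t h
  -- `G` vanishes on `(-∞, 0]` and on `(0, C⁻¹)`
  have hg0 : ∀ t ≤ (0:ℝ), G t = 0 := by
    intro t ht
    rcases eq_or_lt_of_le ht with h | h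
    · rw [hG]
      simp only
      rw [h]
      simp [Real.log_one]
    · have hinv : t⁻¹ < 0 := inv_neg''.2 h
      have hset : {s : ℝ | 0 ≤ s ∧ t⁻¹ < sv T s} = Ici 0 := by
        ext s
        simp only [Set.mem_setOf_eq, Set.mem_Ici]
        exact ⟨fun h' => h'.1, fun h' => ⟨h', hinv.trans_le (sv_nonneg T s)⟩⟩
      have hd : dFun T t⁻¹ = 0 := by
        rw [dFun, hset, Real.volume_Ici, ENNReal.toReal_top]
      rw [hG]
      simp only
      rw [hd, Iv_zero_of_nonpos T le_rfl, mul_zero]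
  have hgsmall : ∀ t, 0 < t → t < C⁻¹ → G t = 0 := by
    intro t ht htC
    have hu : 0 < t⁻¹ := inv_pos.2 ht
    obtain ⟨h0, _, _⟩ := dFun_spec T hC1 hC hu
    have hd : dFun T t⁻¹ = 0 := by
      by_contra hne
      have hdpos : 0 < dFun T t⁻¹ := lt_of_le_of_ne h0 (Ne.symm hne)
      have h1 : t⁻¹ * dFun T t⁻¹ ≤ Iv T (dFun T t⁻¹) := mul_dFun_le_Iv T hC1 hC hu
      have h2 : Iv T (dFun T t⁻¹) ≤ C * Real.log (1 + dFun T t⁻¹) := hC _ h0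
      have h3 : Real.log (1 + dFun T t⁻¹) ≤ dFun T t⁻¹ := by
        have := Real.log_le_sub_one_of_pos (show 0 < 1 + dFun T t⁻¹ by linarith)
        linarith
      have h4 : t⁻¹ * dFun T t⁻¹ ≤ C * dFun T t⁻¹ := by nlinarith
      have h5 : t⁻¹ ≤ C := le_of_mul_le_mul_right (by linarith [h4]) hdpos
      have h6 : C < t⁻¹ := by
        have := inv_strictAnti₀ ht htC
        rwa [inv_inv] at this
      linarith
    rw [hG]
    simp only
    rw [hd, Iv_zero_of_nonpos T le_rfl, mul_zero]
  have hgnn : ∀ t, 0 ≤ G t := by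
    intro t
    rcases le_or_gt t 0 with h | h
    · rw [hg0 t h]
    · have hu : 0 < t⁻¹ := inv_pos.2 h
      have h0 : 0 ≤ dFun T t⁻¹ := (dFun_spec T hC1 hC hu).1
      have hlog : 0 < Real.log (1 + t) := Real.log_pos (by linarith)
      exact mul_nonneg (inv_nonneg.2 hlog.le) (Iv_nonneg T h0)
  have hgbd : Bdd G := by
    have hCpos : 0 < C := by linarith
    have hCinv : 0 < C⁻¹ := inv_pos.2 hCpos
    have hlogC : 0 < Real.log (1 + C⁻¹) := Real.log_pos (by linarith)
    obtain ⟨M, hM⟩ : ∃ M:ℝ, M = C * Real.log (4 * C ^ 2) * (Real.log (1 + C⁻¹))⁻¹ + 2 * C :=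
      ⟨_, rfl⟩
    refine ⟨max M 0, fun t => ?_⟩
    rw [abs_of_nonneg (hgnn t)]
    rcases le_or_gt t 0 with h | h
    · rw [hg0 t h]; exact le_max_right _ _
    rcases lt_or_ge t C⁻¹ with h' | h'
    · rw [hgsmall t h h']; exact le_max_right _ _
    refine le_max_of_le_left ?_
    -- t ≥ C⁻¹ > 0
    have hu : 0 < t⁻¹ := inv_pos.2 h
    have h0 : 0 ≤ dFun T t⁻¹ := (dFun_spec T hC1 hC hu).1
    have hdle : dFun T t⁻¹ ≤ 4 * C ^ 2 * t ^ 2 := dFun_le_sq T hC1 hC h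
    have hlog : 0 < Real.log (1 + t) := Real.log_pos (by linarith)
    have hloge : Real.log (1 + C⁻¹) ≤ Real.log (1 + t) :=
      Real.log_le_log (by linarith) (by linarith)
    have hIle : Iv T (dFun T t⁻¹) ≤ C * Real.log (1 + 4 * C ^ 2 * t ^ 2) := by
      refine le_trans (Iv_mono T h0 hdle) ?_
      refine (hC _ (by positivity)).trans ?_
      have := Real.log_le_log (show (0:ℝ) < 1 + 4 * C ^ 2 * t ^ 2 by positivity)
        (le_refl (1 + 4 * C ^ 2 * t ^ 2))
      linarith [mul_le_mul_of_nonneg_left this hCpos.le]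
    have hlogle : Real.log (1 + 4 * C ^ 2 * t ^ 2) ≤
        Real.log (4 * C ^ 2) + 2 * Real.log (1 + t) := by
      have hle : 1 + 4 * C ^ 2 * t ^ 2 ≤ 4 * C ^ 2 * (1 + t) ^ 2 := by nlinarith
      have h4C : (0:ℝ) < 4 * C ^ 2 := by positivity
      calc Real.log (1 + 4 * C ^ 2 * t ^ 2) ≤ Real.log (4 * C ^ 2 * (1 + t) ^ 2) :=
            Real.log_le_log (by positivity) hle
        _ = Real.log (4 * C ^ 2) + Real.log ((1 + t) ^ 2) :=
            Real.log_mul h4C.ne' (by positivity)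
        _ = Real.log (4 * C ^ 2) + 2 * Real.log (1 + t) := by
            rw [Real.log_pow]; norm_num
    have hlog4C : 0 ≤ Real.log (4 * C ^ 2) := Real.log_nonneg (by nlinarith)
    have hGt : G t ≤ (Real.log (1 + t))⁻¹ *
        (C * (Real.log (4 * C ^ 2) + 2 * Real.log (1 + t))) := by
      rw [hG]
      simp only
      refine mul_le_mul_of_nonneg_left ?_ (inv_nonneg.2 hlog.le)
      refine hIle.trans ?_
      exact mul_le_mul_of_nonneg_left hlogle hCpos.le
    have hexpand : (Real.log (1 + t))⁻¹ *
        (C * (Real.log (4 * C ^ 2) + 2 * Real.log (1 + t)))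
        = C * Real.log (4 * C ^ 2) * (Real.log (1 + t))⁻¹ + 2 * C := by
      field_simp
    rw [hexpand] at hGt
    have hinvle : (Real.log (1 + t))⁻¹ ≤ (Real.log (1 + C⁻¹))⁻¹ :=
      inv_anti₀ hlogC hloge
    have : C * Real.log (4 * C ^ 2) * (Real.log (1 + t))⁻¹ ≤
        C * Real.log (4 * C ^ 2) * (Real.log (1 + C⁻¹))⁻¹ :=
      mul_le_mul_of_nonneg_left hinvle (by positivity)
    rw [hM]
    linarith
  -- the cushion function
  set εf : ℝ → ℝ := fun t => if 1 ≤ t then (Real.log (1 + t))⁻¹ else 1 with hεf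
  have hεbd : Bdd εf := by
    refine ⟨max 1 (Real.log 2)⁻¹, fun t => ?_⟩
    rw [hεf]
    simp only
    split_ifs with h
    · have hlog2 : 0 < Real.log 2 := Real.log_pos (by norm_num)
      have hlog : 0 < Real.log (1 + t) := Real.log_pos (by linarith)
      have : Real.log 2 ≤ Real.log (1 + t) := Real.log_le_log (by norm_num) (by linarith)
      rw [abs_of_nonneg (inv_nonneg.2 hlog.le)]
      exact le_max_of_le_right (inv_anti₀ hlog2 this)
    · rw [abs_one]; exact le_max_left _ _
  have hεnn : ∀ t, 1 ≤ t → 0 ≤ εf t := by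
    intro t ht
    rw [hεf]
    simp only
    rw [if_pos ht]
    have hlog : 0 < Real.log (1 + t) := Real.log_pos (by linarith)
    exact (inv_nonneg.2 hlog.le)
  have hεlim : Tendsto εf atTop (nhds 0) := by
    have h1 : Tendsto (fun t : ℝ => Real.log (1 + t)) atTop atTop :=
      Real.tendsto_log_atTop.comp (tendsto_atTop_add_const_left atTop 1 tendsto_id)
    have h2 : Tendsto (fun t : ℝ => (Real.log (1 + t))⁻¹) atTop (nhds 0) :=
      h1.inv_tendsto_atTop
    refine h2.congr' ?_
    filter_upwards [eventually_ge_atTop (1:ℝ)] with t ht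
    rw [hεf]; simp only [if_pos ht]
  have hωε : γ.ω εf = 0 := γ.lim εf 0 hεbd hεlim
  -- Eventual inequality: avg T ≤ G + εf
  have hev1 : ∀ᶠ t in atTop, avg T t ≤ (G + εf) t := by
    filter_upwards [eventually_ge_atTop (1:ℝ)] with t ht
    have ht0 : 0 < t := by linarith
    have hu : 0 < t⁻¹ := inv_pos.2 ht0
    obtain ⟨h0, hupper, _⟩ := dFun_spec T hC1 hC hu
    have hlog : 0 < Real.log (1 + t) := Real.log_pos (by linarith)
    have hεval : εf t = (Real.log (1 + t))⁻¹ := by rw [hεf]; simp only [if_pos ht]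
    simp only [Pi.add_apply]
    rcases le_or_gt t (dFun T t⁻¹) with hcase | hcase
    · have := Iv_mono T ht0.le hcase
      rw [avg_eq, hG]
      simp only
      have h1 : (Real.log (1 + t))⁻¹ * Iv T t ≤ (Real.log (1 + t))⁻¹ * Iv T (dFun T t⁻¹) :=
        mul_le_mul_of_nonneg_left this (inv_nonneg.2 hlog.le)
      have h2 : 0 ≤ εf t := hεnn t ht
      linarith
    · have hup : Iv T t ≤ Iv T (dFun T t⁻¹) + t⁻¹ * (t - dFun T t⁻¹) :=
        Iv_le_of_upper T h0 hcase.le hu.le hupper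
      have hle1 : t⁻¹ * (t - dFun T t⁻¹) ≤ 1 := by
        have h1 : t⁻¹ * t = 1 := inv_mul_cancel₀ ht0.ne'
        have h2 : 0 ≤ t⁻¹ * dFun T t⁻¹ := mul_nonneg hu.le h0
        nlinarith
      rw [avg_eq, hG]
      simp only
      have h1 : Iv T t ≤ Iv T (dFun T t⁻¹) + 1 := by linarith
      have h2 : (Real.log (1 + t))⁻¹ * Iv T t ≤
          (Real.log (1 + t))⁻¹ * (Iv T (dFun T t⁻¹) + 1) :=
        mul_le_mul_of_nonneg_left h1 (inv_nonneg.2 hlog.le)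
      rw [hεval]
      linarith [h2, mul_add ((Real.log (1 + t))⁻¹) (Iv T (dFun T t⁻¹)) 1]
  -- Eventual inequality: G ≤ a · (avg T) ∘ (·^a)
  have hev2 : ∀ a : ℝ, 1 < a → ∀ᶠ t in atTop, G t ≤ (a • fun s => avg T (s ^ a)) t := by
    intro a ha
    filter_upwards [eventually_ge_atTop (1:ℝ), eventually_dFun_le_rpow T hC1 hC ha]
      with t ht hdle
    have ht0 : 0 < t := by linarith
    have hu : 0 < t⁻¹ := inv_pos.2 ht0
    have h0 : 0 ≤ dFun T t⁻¹ := (dFun_spec T hC1 hC hu).1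
    have hta : (1:ℝ) ≤ t ^ a := by
      have h' := Real.rpow_le_rpow_of_exponent_le ht (by linarith : (1:ℝ) ≤ a)
      rw [Real.rpow_one] at h'
      linarith
    have hlog1 : 0 < Real.log (1 + t) := Real.log_pos (by linarith)
    have hlog2 : 0 < Real.log (1 + t ^ a) := Real.log_pos (by linarith)
    -- 1 + t^a ≤ (1+t)^a
    have hkey : 1 + t ^ a ≤ (1 + t) ^ a := by
      have e1 : (1 + t) ^ (a - 1) * (1 + t) = (1 + t) ^ a := by
        have h' := Real.rpow_add (show (0:ℝ) < 1 + t by linarith) (a - 1) 1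
        rw [Real.rpow_one] at h'
        rw [← h']
        congr 1
        ring
      have e2 : t ^ (a - 1) ≤ (1 + t) ^ (a - 1) :=
        Real.rpow_le_rpow ht0.le (by linarith) (by linarith)
      have e3 : (1:ℝ) ≤ t ^ (a - 1) := by
        have := Real.rpow_le_rpow_of_exponent_le ht (by linarith : (0:ℝ) ≤ a - 1)
        rwa [Real.rpow_zero] at this
      have e4 : t ^ (a - 1) * t = t ^ a := by
        have h' := Real.rpow_add ht0 (a - 1) 1
        rw [Real.rpow_one] at h'
        rw [← h']
        congr 1
        ring
      have e5 : t ^ (a - 1) * (1 + t) = t ^ (a - 1) + t ^ a := by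
        rw [mul_add, mul_one, e4]
      nlinarith [Real.rpow_nonneg (show (0:ℝ) ≤ 1 + t by linarith) (a - 1)]
    have hlogle : Real.log (1 + t ^ a) ≤ a * Real.log (1 + t) := by
      calc Real.log (1 + t ^ a) ≤ Real.log ((1 + t) ^ a) :=
            Real.log_le_log (by linarith) hkey
        _ = a * Real.log (1 + t) := Real.log_rpow (by linarith) a
    have hinvle : (Real.log (1 + t))⁻¹ ≤ a * (Real.log (1 + t ^ a))⁻¹ := by
      rw [inv_eq_one_div, ← div_eq_mul_inv, div_le_div_iff₀ hlog1 hlog2]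
      linarith
    have hInn : 0 ≤ Iv T (t ^ a) := Iv_nonneg T (by linarith)
    have hImono : Iv T (dFun T t⁻¹) ≤ Iv T (t ^ a) := Iv_mono T h0 hdle
    simp only [Pi.smul_apply, smul_eq_mul]
    rw [hG, avg_eq]
    simp only
    calc (Real.log (1 + t))⁻¹ * Iv T (dFun T t⁻¹)
        ≤ (Real.log (1 + t))⁻¹ * Iv T (t ^ a) :=
          mul_le_mul_of_nonneg_left hImono (inv_nonneg.2 hlog1.le)
      _ ≤ (a * (Real.log (1 + t ^ a))⁻¹) * Iv T (t ^ a) :=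
          mul_le_mul_of_nonneg_right hinvle hInn
      _ = a * ((Real.log (1 + t ^ a))⁻¹ * Iv T (t ^ a)) := by ring
  -- now conclude
  have step1 : γ.ω (avg T) ≤ γ.ω G := by
    have h1 : γ.ω (avg T) ≤ γ.ω (G + εf) :=
      omega_mono γ hfbd (Bdd.add' hgbd hεbd) hev1
    have h2 : γ.ω (G + εf) = γ.ω G + γ.ω εf := γ.add G εf hgbd hεbd
    linarith [hωε]
  have step2 : ∀ a : ℝ, 1 < a → γ.ω G ≤ a * γ.ω (avg T) := by
    intro a ha
    have hcomp : Bdd (fun t => avg T (t ^ a)) := Bdd.comp' hfbd _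
    have hsmul : Bdd (a • fun t => avg T (t ^ a)) := Bdd.smul' hcomp a
    have h1 : γ.ω G ≤ γ.ω (a • fun t => avg T (t ^ a)) :=
      omega_mono γ hgbd hsmul (hev2 a ha)
    have h2 : γ.ω (a • fun t => avg T (t ^ a)) = a * γ.ω (fun t => avg T (t ^ a)) :=
      γ.smul a _ hcomp
    have h3 : γ.ω (fun t => avg T (t ^ a)) = γ.ω (avg T) :=
      hexp (avg T) hfbd a (by linarith)
    rw [h2, h3] at h1
    exact h1
  have hωf0 : 0 ≤ γ.ω (avg T) := γ.pos _ hfbd hfnn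
  have step3 : γ.ω G ≤ γ.ω (avg T) := by
    apply le_of_forall_pos_le_add
    intro ε hε
    have hden : 0 < γ.ω (avg T) + 1 := by linarith
    have ha : 1 < 1 + ε / (γ.ω (avg T) + 1) := by
      have : 0 < ε / (γ.ω (avg T) + 1) := div_pos hε hden
      linarith
    have h := step2 _ ha
    have hfrac : ε / (γ.ω (avg T) + 1) * γ.ω (avg T) ≤ ε := by
      rw [div_mul_eq_mul_div, div_le_iff₀ hden]
      nlinarith
    nlinarith [h]
  exact le_antisymm step1 step3
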